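/- Let G = (V,D,B) be an acyclic mixed graph on V = [n], let Λ ∈ ℝ^D and Ω ∈ PD(B), and let Σ = (I−Λ)^{-T} Ω (I−Λ)^{-1}. Then for all v, w ∈ V, the entry Σ_{vw} equals the sum, over all treks π from v to w in G, of the trek monomial π(Λ,Ω). -/

import Mathlib

open scoped Classical Matrix

/-- The directed part of the graph contains no directed cycle. -/
def Acyclic {n : ℕ} (D : Finset (Fin n × Fin n)) : Prop :=
  ∀ v : Fin n, ¬ Relation.TransGen (fun a b => (a, b) ∈ D) v v

/-- Mixed graph axioms: the bidirected edge set is symmetric and there are no self loops. -/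
def IsMixedGraph {n : ℕ} (D B : Finset (Fin n × Fin n)) : Prop :=
  (∀ v w : Fin n, (v, w) ∈ B → (w, v) ∈ B) ∧ ∀ v : Fin n, (v, v) ∉ D ∧ (v, v) ∉ B

/-- `IsTrek D B v w L R`: `L` is the left side of a trek from `v` to `w`, listed from the top
node down to the source `v` (consecutive vertices joined by directed edges pointing towards
`v`); `R` is the right side, listed from the top down to the target `w`.  Either the two tops
coincide (no bidirected edge) or they are joined by a bidirected edge. -/
def IsTrek {n : ℕ} (D B : Finset (Fin n × Fin n)) (v w : Fin n)
    (L R : List (Fin n)) : Prop :=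
  L ≠ [] ∧ R ≠ [] ∧
    L.Chain' (fun a b => (a, b) ∈ D) ∧ R.Chain' (fun a b => (a, b) ∈ D) ∧
    L.getLast? = some v ∧ R.getLast? = some w ∧
    (L.head? = R.head? ∨
      ∃ u z : Fin n, L.head? = some u ∧ R.head? = some z ∧ (u, z) ∈ B)

/-- Product of the matrix entries `Λ x y` over the consecutive pairs `(x, y)` of a list,
i.e. the product of the directed-edge coefficients along a directed path. -/
noncomputable def edgeProd {n : ℕ} (Λ : Matrix (Fin n) (Fin n) ℝ) :
    List (Fin n) → ℝ
  | [] => 1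
  | [_] => 1
  | x :: y :: rest => Λ x y * edgeProd Λ (y :: rest)

/-- The trek monomial of the trek with sides `L`, `R`. -/
noncomputable def trekWeight {n : ℕ} (Λ Ω : Matrix (Fin n) (Fin n) ℝ)
    (L R : List (Fin n)) : ℝ :=
  (match L.head?, R.head? with
    | some u, some z => Ω u z
    | _, _ => 0) * edgeProd Λ L * edgeProd Λ R

/-- `u` is an ancestor of `v`: there is a (possibly empty) directed path from `u` to `v`. -/
def IsAncestor {n : ℕ} (D : Finset (Fin n × Fin n)) (u v : Fin n) : Prop :=
  Relation.ReflTransGen (fun a b => (a, b) ∈ D) u v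

/-- `V'` is an ancestral subset: it contains all ancestors of its members. -/
def Ancestral {n : ℕ} (D : Finset (Fin n × Fin n)) (V' : Finset (Fin n)) : Prop :=
  ∀ u v : Fin n, IsAncestor D u v → v ∈ V' → u ∈ V'

/-- The parents of `v`. -/
def paF {n : ℕ} (D : Finset (Fin n × Fin n)) (v : Fin n) : Finset (Fin n) :=
  Finset.univ.filter fun w => (w, v) ∈ D

/-- `htr D B v`: the set of vertices `w ∉ {v} ∪ sib(v)` reachable from `v` by a half-trek. -/
def htr {n : ℕ} (D B : Finset (Fin n × Fin n)) (v : Fin n) : Set (Fin n) :=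
  {w | w ≠ v ∧ (v, w) ∉ B ∧ ∃ R, IsTrek D B v w [v] R}

/-- `Y` satisfies the half-trek criterion with respect to `v`: `|Y| = |pa(v)|`,
`Y ∩ ({v} ∪ sib(v)) = ∅`, and there is a system of half-treks with no sided intersection
from `Y` to `pa(v)` (given by a source `src p ∈ Y` and a right side `R p` for each parent
`p`, with pairwise distinct sources and pairwise disjoint right sides). -/
def SatisfiesHTC {n : ℕ} (D B : Finset (Fin n × Fin n)) (v : Fin n)
    (Y : Finset (Fin n)) : Prop :=
  Y.card = (paF D v).card ∧
    (∀ y ∈ Y, y ≠ v ∧ (y, v) ∉ B) ∧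
    ∃ (src : Fin n → Fin n) (R : Fin n → List (Fin n)),
      (∀ p ∈ paF D v, src p ∈ Y ∧ IsTrek D B (src p) p [src p] (R p)) ∧
      ∀ p ∈ paF D v, ∀ q ∈ paF D v, p ≠ q →
        src p ≠ src q ∧ ∀ x ∈ R p, x ∉ R q

/-- The parameter space `Θ = ℝ^D × PD(B)`. -/
def Theta {α : Type} [Fintype α] (D B : Set (α × α)) :
    Set (Matrix α α ℝ × Matrix α α ℝ) :=
  {p : Matrix α α ℝ × Matrix α α ℝ |
    (∀ v w : α, p.1 v w ≠ 0 → (v, w) ∈ D) ∧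
      p.2.PosDef ∧ ∀ v w : α, v ≠ w → p.2 v w ≠ 0 → (v, w) ∈ B}

/-- The parameterization map `φ(Λ, Ω) = (I - Λ)⁻ᵀ Ω (I - Λ)⁻¹`. -/
noncomputable def phi {α : Type} [Fintype α] [DecidableEq α]
    (p : Matrix α α ℝ × Matrix α α ℝ) : Matrix α α ℝ :=
  ((1 - p.1)⁻¹)ᵀ * p.2 * (1 - p.1)⁻¹

/-- Evaluation of a polynomial in the entries of the two parameter matrices. -/
noncomputable def polyEval {α : Type} [Fintype α]
    (f : MvPolynomial ((α × α) ⊕ (α × α)) ℝ)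
    (p : Matrix α α ℝ × Matrix α α ℝ) : ℝ :=
  MvPolynomial.eval (Sum.elim (fun e => p.1 e.1 e.2) (fun e => p.2 e.1 e.2)) f

/-- `A` is a proper algebraic subset of `Θ`: the intersection of `Θ` with the zero set of a
polynomial in the matrix entries that does not vanish identically on `Θ`. -/
def IsProperAlg {α : Type} [Fintype α]
    (Θ A : Set (Matrix α α ℝ × Matrix α α ℝ)) : Prop :=
  ∃ f : MvPolynomial ((α × α) ⊕ (α × α)) ℝ,
    (∃ p ∈ Θ, polyEval f p ≠ 0) ∧ A = {p ∈ Θ | polyEval f p = 0}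

/-- Generic identifiability: `φ` is injective off a proper algebraic subset. -/
def GenId {α : Type} [Fintype α] [DecidableEq α] (D B : Set (α × α)) : Prop :=
  ∃ A, IsProperAlg (Theta D B) A ∧
    ∀ p ∈ Theta D B \ A, ∀ q ∈ Theta D B \ A, phi p = phi q → p = q

/-- Generic identifiability of the single coefficient `λ_{uv}`. -/
def GenIdLambda {α : Type} [Fintype α] [DecidableEq α] (D B : Set (α × α))
    (u v : α) : Prop :=
  ∃ A, IsProperAlg (Theta D B) A ∧
    ∀ p ∈ Theta D B \ A, ∀ q ∈ Theta D B \ A, phi p = phi q → p.1 u v = q.1 u v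

/-- Generic identifiability of the single coefficient `ω_{uv}`. -/
def GenIdOmega {α : Type} [Fintype α] [DecidableEq α] (D B : Set (α × α))
    (u v : α) : Prop :=
  ∃ A, IsProperAlg (Theta D B) A ∧
    ∀ p ∈ Theta D B \ A, ∀ q ∈ Theta D B \ A, phi p = phi q → p.2 u v = q.2 u v

/-- Generic identifiability of the coefficient vector `Λ_{pa(v), v}`. -/
def GenIdCol {α : Type} [Fintype α] [DecidableEq α] (D B : Set (α × α))
    (v : α) : Prop :=
  ∃ A, IsProperAlg (Theta D B) A ∧
    ∀ p ∈ Theta D B \ A, ∀ q ∈ Theta D B \ A, phi p = phi q →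
      ∀ u : α, (u, v) ∈ D → p.1 u v = q.1 u v

/-- The fiber of the parameter point `p` within `Θ`. -/
def fiber {α : Type} [Fintype α] [DecidableEq α] (D B : Set (α × α))
    (p : Matrix α α ℝ × Matrix α α ℝ) :
    Set (Matrix α α ℝ × Matrix α α ℝ) :=
  {q ∈ Theta D B | phi q = phi p}

/-- Generically infinite-to-one. -/
def GenInfToOne {α : Type} [Fintype α] [DecidableEq α] (D B : Set (α × α)) : Prop :=
  ∃ A, IsProperAlg (Theta D B) A ∧
    ∀ p ∈ Theta D B \ A, (fiber D B p).Infinite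

/-- Generically `h`-to-one: every fiber off a proper algebraic subset has exactly `h` points. -/
def GenHToOne {α : Type} [Fintype α] [DecidableEq α] (D B : Set (α × α))
    (h : ℕ) : Prop :=
  ∃ A, IsProperAlg (Theta D B) A ∧
    ∀ p ∈ Theta D B \ A, (fiber D B p).Finite ∧ (fiber D B p).ncard = h

/-- `w` lies in the connected component of `c` in the bidirected part `(V, B)`. -/
def bidirConn {n : ℕ} (B : Finset (Fin n × Fin n)) (c w : Fin n) : Prop :=
  Relation.ReflTransGen (fun a b => (a, b) ∈ B) c w

/-- The connected component `C` of `c` in the bidirected part. -/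
noncomputable def Cset {n : ℕ} (B : Finset (Fin n × Fin n)) (c : Fin n) :
    Finset (Fin n) :=
  Finset.univ.filter (bidirConn B c)

/-- The vertex set `V_i = C_i ∪ pa(C_i)` of the mixed component of `c`. -/
noncomputable def Vset {n : ℕ} (D B : Finset (Fin n × Fin n)) (c : Fin n) :
    Finset (Fin n) :=
  Cset B c ∪ Finset.univ.filter fun v => ∃ w ∈ Cset B c, (v, w) ∈ D

/-- The directed edges `D_i = {(v, w) ∈ D : v ∈ V_i, w ∈ C_i}` of the mixed component of `c`. -/
def compD {n : ℕ} (D B : Finset (Fin n × Fin n)) (c : Fin n) :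
    Set (↥(Vset D B c) × ↥(Vset D B c)) :=
  {e | ((e.1 : Fin n), (e.2 : Fin n)) ∈ D ∧ (e.2 : Fin n) ∈ Cset B c}

/-- The bidirected edges `B_i = {(v, w) ∈ B : v, w ∈ C_i}` of the mixed component of `c`. -/
def compB {n : ℕ} (D B : Finset (Fin n × Fin n)) (c : Fin n) :
    Set (↥(Vset D B c) × ↥(Vset D B c)) :=
  {e | ((e.1 : Fin n), (e.2 : Fin n)) ∈ B ∧ (e.1 : Fin n) ∈ Cset B c ∧
    (e.2 : Fin n) ∈ Cset B c}

/-- The edges of the induced subgraph `G_{V'}`, as pairs of vertices of the subtype `V'`. -/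
def inducedE {n : ℕ} (E : Finset (Fin n × Fin n)) (V' : Finset (Fin n)) :
    Set (↥V' × ↥V') :=
  {e | ((e.1 : Fin n), (e.2 : Fin n)) ∈ E}

section TrekAux

variable {n : ℕ}

lemma trek_nodup_of_chain (D : Finset (Fin n × Fin n)) (hacyc : Acyclic D)
    {L : List (Fin n)} (h : L.Chain' fun a b => (a, b) ∈ D) : L.Nodup := by
  have h2 : L.Chain' (Relation.TransGen fun a b => (a, b) ∈ D) :=
    List.IsChain.imp (fun a b hab => Relation.TransGen.single hab) h
  have h3 : L.Pairwise (Relation.TransGen fun a b => (a, b) ∈ D) :=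
    List.isChain_iff_pairwise.mp h2
  have h4 : L.Pairwise (fun a b => a ≠ b) :=
    h3.imp fun {a b} hab => fun heq => hacyc b (by rw [heq] at hab; exact hab)
  exact h4

def trekPathToSet (D : Finset (Fin n × Fin n)) (v : Fin n) : Set (List (Fin n)) :=
  {L | L ≠ [] ∧ (L.Chain' fun a b => (a, b) ∈ D) ∧ L.getLast? = some v}

lemma finite_trekPathToSet (D : Finset (Fin n × Fin n)) (hacyc : Acyclic D) (v : Fin n) :
    (trekPathToSet D v).Finite := by
  have h1 : {L : List (Fin n) | L.Nodup}.Finite := by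
    have := Set.finite_range (Subtype.val : {l : List (Fin n) // l.Nodup} → List (Fin n))
    rwa [Subtype.range_coe_subtype] at this
  exact h1.subset fun L hL => trek_nodup_of_chain D hacyc hL.2.1

noncomputable def trekPathsTo (D : Finset (Fin n × Fin n)) (hacyc : Acyclic D) (v : Fin n) :
    Finset (List (Fin n)) :=
  (finite_trekPathToSet D hacyc v).toFinset

noncomputable def trekPaths [Inhabited (Fin n)] (D : Finset (Fin n × Fin n))
    (hacyc : Acyclic D) (u v : Fin n) : Finset (List (Fin n)) :=
  (trekPathsTo D hacyc v).filter fun L => L.headI = u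

lemma mem_trekPathsTo {D : Finset (Fin n × Fin n)} {hacyc : Acyclic D} {v : Fin n}
    {L : List (Fin n)} : L ∈ trekPathsTo D hacyc v ↔
      L ≠ [] ∧ (L.Chain' fun a b => (a, b) ∈ D) ∧ L.getLast? = some v := by
  simp [trekPathsTo, trekPathToSet]

lemma mem_trekPaths [Inhabited (Fin n)] {D : Finset (Fin n × Fin n)} {hacyc : Acyclic D}
    {u v : Fin n} {L : List (Fin n)} : L ∈ trekPaths D hacyc u v ↔
      L ≠ [] ∧ (L.Chain' fun a b => (a, b) ∈ D) ∧ L.headI = u ∧ L.getLast? = some v := by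
  simp [trekPaths, mem_trekPathsTo]; tauto

lemma head?_eq_headI [Inhabited (Fin n)] {L : List (Fin n)} (h : L ≠ []) :
    L.head? = some L.headI := by
  cases L with
  | nil => exact absurd rfl h
  | cons a t => rfl

lemma trekPaths_sum_rec [Inhabited (Fin n)] (D : Finset (Fin n × Fin n)) (hacyc : Acyclic D)
    (Λ : Matrix (Fin n) (Fin n) ℝ) (hΛ : ∀ v w : Fin n, Λ v w ≠ 0 → (v, w) ∈ D)
    (u v : Fin n) :
    ∑ L ∈ trekPaths D hacyc u v, edgeProd Λ L =
      (if u = v then 1 else 0) +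
        ∑ c, Λ u c * ∑ L ∈ trekPaths D hacyc c v, edgeProd Λ L := by
  classical
  rw [← Finset.sum_filter_add_sum_filter_not (trekPaths D hacyc u v)
    (fun L => 2 ≤ L.length) (edgeProd Λ)]
  have h1 : (trekPaths D hacyc u v).filter (fun L => ¬ 2 ≤ L.length) =
      if u = v then {[u]} else ∅ := by
    ext L
    simp only [Finset.mem_filter, mem_trekPaths, not_le]
    constructor
    · rintro ⟨⟨hne, hch, hh, hl⟩, hlen⟩
      match L, hne with
      | [a], _ =>
        simp only [List.headI_cons] at hh
        simp only [List.getLast?_singleton, Option.some.injEq] at hl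
        subst hh; subst hl
        simp
      | a :: b :: t, _ =>
        simp only [List.length_cons] at hlen
        omega
    · intro hL
      by_cases huv : u = v
      · rw [if_pos huv, Finset.mem_singleton] at hL
        subst hL
        refine ⟨⟨by simp, List.isChain_singleton u, rfl, by simp [huv]⟩, by simp⟩
      · rw [if_neg huv] at hL
        simp at hL
  have h2 : ∑ L ∈ (trekPaths D hacyc u v).filter (fun L => ¬ 2 ≤ L.length),
      edgeProd Λ L = (if u = v then 1 else 0) := by
    rw [h1]
    by_cases huv : u = v <;> simp [huv, edgeProd]
  have h3 : ∑ L ∈ (trekPaths D hacyc u v).filter (fun L => 2 ≤ L.length),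
      edgeProd Λ L = ∑ c, Λ u c * ∑ L ∈ trekPaths D hacyc c v, edgeProd Λ L := by
    have e1 : ∀ c : Fin n, Λ u c * ∑ L ∈ trekPaths D hacyc c v, edgeProd Λ L =
        ∑ L ∈ trekPaths D hacyc c v, Λ u c * edgeProd Λ L := fun c => Finset.mul_sum _ _ _
    simp only [e1]
    rw [← Finset.sum_sigma (Finset.univ : Finset (Fin n)) (fun c => trekPaths D hacyc c v)
      (fun p => Λ u p.1 * edgeProd Λ p.2)]
    rw [← Finset.sum_subset
      (Finset.filter_subset (fun p : Σ _ : Fin n, List (Fin n) => (u, p.1) ∈ D)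
        ((Finset.univ : Finset (Fin n)).sigma (fun c => trekPaths D hacyc c v)))
      (by
        intro p hp hpn
        simp only [Finset.mem_filter, hp, true_and] at hpn
        have h0 : Λ u p.1 = 0 := by
          by_contra hne
          exact hpn (hΛ u p.1 hne)
        simp [h0])]
    refine Finset.sum_nbij' (fun L => (⟨L.tail.headI, L.tail⟩ : Σ _ : Fin n, List (Fin n)))
      (fun p => u :: p.2) ?_ ?_ ?_ ?_ ?_
    · intro L hL
      simp only [Finset.mem_filter, mem_trekPaths] at hL
      obtain ⟨⟨hne, hch, hh, hl⟩, hlen⟩ := hL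
      cases L with
      | nil => exact absurd rfl hne
      | cons a t =>
        cases t with
        | nil => simp at hlen
        | cons b t' =>
          simp only [List.headI_cons] at hh
          subst hh
          simp only [Finset.mem_filter, Finset.mem_sigma, Finset.mem_univ, true_and,
            mem_trekPaths]
          exact ⟨⟨by simp, (List.isChain_cons_cons.mp hch).2,
            by rw [List.getLast?_cons_cons] at hl; exact hl⟩, (List.isChain_cons_cons.mp hch).1⟩
    · intro p hp
      obtain ⟨c, L⟩ := p
      simp only [Finset.mem_filter, Finset.mem_sigma, Finset.mem_univ, true_and,
        mem_trekPaths] at hp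
      obtain ⟨⟨hne, hch, hh, hl⟩, hD⟩ := hp
      cases L with
      | nil => exact absurd rfl hne
      | cons a t =>
        simp only [List.headI_cons] at hh
        subst hh
        simp only [Finset.mem_filter, mem_trekPaths]
        refine ⟨⟨by simp, List.isChain_cons_cons.mpr ⟨hD, hch⟩, rfl, ?_⟩, by simp⟩
        rw [List.getLast?_cons_cons]; exact hl
    · intro L hL
      simp only [Finset.mem_filter, mem_trekPaths] at hL
      obtain ⟨⟨hne, hch, hh, hl⟩, hlen⟩ := hL
      cases L with
      | nil => exact absurd rfl hne
      | cons a t =>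
        cases t with
        | nil => simp at hlen
        | cons b t' =>
          simp only [List.headI_cons] at hh
          subst hh
          simp
    · intro p hp
      obtain ⟨c, L⟩ := p
      simp only [Finset.mem_filter, Finset.mem_sigma, Finset.mem_univ, true_and,
        mem_trekPaths] at hp
      obtain ⟨⟨hne, hch, hh, hl⟩, hD⟩ := hp
      simp only [List.tail_cons]
      rw [hh]
    · intro L hL
      simp only [Finset.mem_filter, mem_trekPaths] at hL
      obtain ⟨⟨hne, hch, hh, hl⟩, hlen⟩ := hL
      cases L with
      | nil => exact absurd rfl hne
      | cons a t =>
        cases t with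
        | nil => simp at hlen
        | cons b t' =>
          simp only [List.headI_cons] at hh
          subst hh
          simp [edgeProd]
  rw [h2, h3]
  ring

end TrekAux

theorem stmt1 (n : ℕ) (D B : Finset (Fin n × Fin n))
    (hG : IsMixedGraph D B) (hacyc : Acyclic D)
    (Λ Ω : Matrix (Fin n) (Fin n) ℝ)
    (hΛ : ∀ v w : Fin n, Λ v w ≠ 0 → (v, w) ∈ D)
    (hΩ : Ω.PosDef ∧ ∀ v w : Fin n, v ≠ w → Ω v w ≠ 0 → (v, w) ∈ B)
    (v w : Fin n) :
    ((((1 - Λ)⁻¹)ᵀ * Ω * (1 - Λ)⁻¹ : Matrix (Fin n) (Fin n) ℝ)) v w =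
      ∑' π : {p : List (Fin n) × List (Fin n) // IsTrek D B v w p.1 p.2},
        trekWeight Λ Ω π.1.1 π.1.2 := by
  classical
  haveI : Inhabited (Fin n) := ⟨v⟩
  set N : Matrix (Fin n) (Fin n) ℝ :=
    Matrix.of fun u z => ∑ L ∈ trekPaths D hacyc u z, edgeProd Λ L with hNdef
  have hNa : ∀ u z : Fin n, N u z = ∑ L ∈ trekPaths D hacyc u z, edgeProd Λ L := by
    intro u z; rw [hNdef]; rfl
  have hone : (1 - Λ) * N = 1 := by
    ext u z
    rw [Matrix.mul_apply]
    have hterm : ∀ c, ((1 : Matrix (Fin n) (Fin n) ℝ) - Λ) u c * N c z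
        = (if u = c then N c z else 0) - Λ u c * N c z := by
      intro c
      rw [Matrix.sub_apply, Matrix.one_apply]
      split <;> ring
    simp only [hterm]
    rw [Finset.sum_sub_distrib, Finset.sum_ite_eq, if_pos (Finset.mem_univ u),
      Matrix.one_apply]
    simp only [hNa]
    rw [trekPaths_sum_rec D hacyc Λ hΛ u z]
    ring
  have hA : (1 - Λ)⁻¹ = N := Matrix.inv_eq_right_inv hone
  have hLHS : (Nᵀ * Ω * N) v w = ∑ u, ∑ z, Ω u z * N u v * N z w := by
    simp only [Matrix.mul_apply, Matrix.transpose_apply, Finset.sum_mul]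
    rw [Finset.sum_comm]
    exact Finset.sum_congr rfl fun u _ => Finset.sum_congr rfl fun z _ => by ring
  have hfilt : ∀ z w' : Fin n, (trekPathsTo D hacyc w').filter (fun R => R.headI = z)
      = trekPaths D hacyc z w' := fun z w' => rfl
  have hRHS : (∑' π : {p : List (Fin n) × List (Fin n) // IsTrek D B v w p.1 p.2},
      trekWeight Λ Ω π.1.1 π.1.2) = ∑ u, ∑ z, Ω u z * N u v * N z w := by
    have e0 : (∑' π : {p : List (Fin n) × List (Fin n) // IsTrek D B v w p.1 p.2},
        trekWeight Λ Ω π.1.1 π.1.2)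
        = ∑' p : List (Fin n) × List (Fin n),
            Set.indicator {p : List (Fin n) × List (Fin n) | IsTrek D B v w p.1 p.2}
              (fun p => trekWeight Λ Ω p.1 p.2) p :=
      tsum_subtype {p : List (Fin n) × List (Fin n) | IsTrek D B v w p.1 p.2}
        (fun p => trekWeight Λ Ω p.1 p.2)
    rw [e0, tsum_eq_sum (s := (trekPathsTo D hacyc v) ×ˢ (trekPathsTo D hacyc w))
      (by
        intro p hp
        apply Set.indicator_apply_eq_zero.mpr
        intro hmem
        exact absurd (Finset.mem_product.mpr
          ⟨mem_trekPathsTo.mpr ⟨hmem.1, hmem.2.2.1, hmem.2.2.2.2.1⟩,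
            mem_trekPathsTo.mpr ⟨hmem.2.1, hmem.2.2.2.1, hmem.2.2.2.2.2.1⟩⟩) hp)]
    rw [Finset.sum_product]
    have hind : ∀ L ∈ trekPathsTo D hacyc v, ∀ R ∈ trekPathsTo D hacyc w,
        Set.indicator {p : List (Fin n) × List (Fin n) | IsTrek D B v w p.1 p.2}
          (fun p => trekWeight Λ Ω p.1 p.2) (L, R)
        = Ω L.headI R.headI * edgeProd Λ L * edgeProd Λ R := by
      intro L hL R hR
      rw [mem_trekPathsTo] at hL hR
      obtain ⟨hL1, hL2, hL3⟩ := hL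
      obtain ⟨hR1, hR2, hR3⟩ := hR
      have hLh := head?_eq_headI hL1
      have hRh := head?_eq_headI hR1
      by_cases ht : IsTrek D B v w L R
      · rw [Set.indicator_of_mem
          (show (L, R) ∈ {p : List (Fin n) × List (Fin n) | IsTrek D B v w p.1 p.2} from ht)
          (fun p => trekWeight Λ Ω p.1 p.2)]
        simp only [trekWeight, hLh, hRh]
      · rw [Set.indicator_of_notMem
          (show (L, R) ∉ {p : List (Fin n) × List (Fin n) | IsTrek D B v w p.1 p.2} from ht)
          (fun p => trekWeight Λ Ω p.1 p.2)]
        have hfail : ¬ (L.head? = R.head? ∨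
            ∃ u z : Fin n, L.head? = some u ∧ R.head? = some z ∧ (u, z) ∈ B) := by
          intro hor
          exact ht ⟨hL1, hR1, hL2, hR2, hL3, hR3, hor⟩
        push_neg at hfail
        obtain ⟨hne, hB⟩ := hfail
        have hneq : L.headI ≠ R.headI := by
          intro h; apply hne; rw [hLh, hRh, h]
        have hOz : Ω L.headI R.headI = 0 := by
          by_contra h0
          exact hB L.headI R.headI hLh hRh (hΩ.2 _ _ hneq h0)
        rw [hOz]; ring
    rw [Finset.sum_congr rfl (fun L hL => Finset.sum_congr rfl (fun R hR => hind L hL R hR))]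
    have eRfib : ∀ L : List (Fin n),
        ∑ R ∈ trekPathsTo D hacyc w, Ω L.headI R.headI * edgeProd Λ L * edgeProd Λ R
        = ∑ z, Ω L.headI z * edgeProd Λ L * N z w := by
      intro L
      rw [← Finset.sum_fiberwise_of_maps_to (t := (Finset.univ : Finset (Fin n)))
        (g := fun R : List (Fin n) => R.headI)
        (fun R _ => Finset.mem_univ R.headI)
        (fun R => Ω L.headI R.headI * edgeProd Λ L * edgeProd Λ R)]
      refine Finset.sum_congr rfl fun z _ => ?_
      rw [hfilt z w]
      calc ∑ R ∈ trekPaths D hacyc z w, Ω L.headI R.headI * edgeProd Λ L * edgeProd Λ R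
          = ∑ R ∈ trekPaths D hacyc z w, Ω L.headI z * edgeProd Λ L * edgeProd Λ R := by
            refine Finset.sum_congr rfl fun R hR => ?_
            rw [(mem_trekPaths.mp hR).2.2.1]
        _ = Ω L.headI z * edgeProd Λ L * N z w := by
            rw [hNa, ← Finset.mul_sum]
    rw [Finset.sum_congr rfl (fun L _ => eRfib L)]
    rw [← Finset.sum_fiberwise_of_maps_to (t := (Finset.univ : Finset (Fin n)))
      (g := fun L : List (Fin n) => L.headI)
      (fun L _ => Finset.mem_univ L.headI)
      (fun L => ∑ z, Ω L.headI z * edgeProd Λ L * N z w)]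
    refine Finset.sum_congr rfl fun u _ => ?_
    rw [hfilt u v, Finset.sum_comm]
    refine Finset.sum_congr rfl fun z _ => ?_
    calc ∑ L ∈ trekPaths D hacyc u v, Ω L.headI z * edgeProd Λ L * N z w
        = ∑ L ∈ trekPaths D hacyc u v, (Ω u z * N z w) * edgeProd Λ L := by
          refine Finset.sum_congr rfl fun L hL => ?_
          rw [(mem_trekPaths.mp hL).2.2.1]
          ring
      _ = Ω u z * N u v * N z w := by
          rw [← Finset.mul_sum, hNa u v]
          ring
  rw [hA, hRHS]
  exact hLHS
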